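/- arXiv:1301.5034 — 3 statements merged into one kernel-verified Lean document; each statement's English description precedes it below -/
import Mathlib

section
/- Let α > 2 be a real number, Ψ a positive integer, and a > 0 a real number. Then ∫_{ℝ²} ( 1 − (1 + a‖y‖^{-α})^{-Ψ} ) dy = a^{2/α} · C(α, Ψ), where the integral is over ℝ² with Lebesgue measure. -/
open MeasureTheory Real

/-- Euler's Beta function `B(a, b) = ∫_0^1 t^(a-1) (1-t)^(b-1) dt`. -/
noncomputable def betaFn (a b : ℝ) : ℝ :=
  ∫ t in (0:ℝ)..1, t ^ (a - 1) * (1 - t) ^ (b - 1)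

/-- The constant `C(α, Ψ) = (2π/α) Σ_{m=1}^{Ψ} binom(Ψ,m) B(Ψ - m + 2/α, m - 2/α)`. -/
noncomputable def Cfun (α : ℝ) (Ψ : ℕ) : ℝ :=
  (2 * π / α) * ∑ m ∈ Finset.Icc 1 Ψ,
    (Ψ.choose m : ℝ) * betaFn ((Ψ : ℝ) - m + 2 / α) ((m : ℝ) - 2 / α)

open Set in
lemma betaAux_integrableOn {x y : ℝ} (hx : 0 < x) (hy : 0 < y) :
    IntegrableOn (fun t : ℝ => t ^ (x - 1) * (1 - t) ^ (y - 1)) (Ioo 0 1) := by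
  have h := (Complex.betaIntegral_convergent (u := (x:ℂ)) (v := (y:ℂ))
    (by simpa using hx) (by simpa using hy)).norm
  rw [intervalIntegrable_iff_integrableOn_Ioc_of_le zero_le_one] at h
  refine (h.mono_set Ioo_subset_Ioc_self).congr_fun ?_ measurableSet_Ioo
  intro t ht
  have ht1 : (0:ℝ) < 1 - t := by linarith [ht.2]
  have e1 : ((x:ℂ) - 1) = ((x - 1 : ℝ) : ℂ) := by push_cast; ring
  have e2 : ((y:ℂ) - 1) = ((y - 1 : ℝ) : ℂ) := by push_cast; ring
  have e3 : (1 - (t:ℂ)) = ((1 - t : ℝ) : ℂ) := by push_cast; ring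
  simp only [norm_mul, e1, e2, e3,
    Complex.norm_cpow_eq_rpow_re_of_pos ht.1, Complex.norm_cpow_eq_rpow_re_of_pos ht1,
    Complex.ofReal_re]

open Set in
/-- For `α > 2`, `Ψ ≥ 1` and `a > 0`,
`∫_{ℝ²} (1 − (1 + a‖y‖^{-α})^{-Ψ}) dy = a^{2/α} · C(α, Ψ)`. -/
theorem integral_one_sub_inv_one_add_norm_rpow
    (α : ℝ) (hα : 2 < α) (Ψ : ℕ) (hΨ : 1 ≤ Ψ) (a : ℝ) (ha : 0 < a) :
    ∫ y : EuclideanSpace ℝ (Fin 2), (1 - ((1 + a * ‖y‖ ^ (-α)) ^ Ψ)⁻¹) =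
      a ^ (2 / α) * Cfun α Ψ := by
  have hα0 : (0:ℝ) < α := by linarith
  have hc1 : 2 / α < 1 := (div_lt_one hα0).mpr hα
  have hc0 : (0:ℝ) < 2 / α := by positivity
  -- Step 1: reduce to a radial integral
  have h1 : (∫ y : EuclideanSpace ℝ (Fin 2), (1 - ((1 + a * ‖y‖ ^ (-α)) ^ Ψ)⁻¹))
      = 2 * (π * ∫ r in Ioi (0:ℝ), r * (1 - ((1 + a * r ^ (-α)) ^ Ψ)⁻¹)) := by
    rw [MeasureTheory.integral_fun_norm_addHaar (volume)
      (fun r : ℝ => 1 - ((1 + a * r ^ (-α)) ^ Ψ)⁻¹)]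
    have hball : (volume (Metric.ball (0 : EuclideanSpace ℝ (Fin 2)) 1)).toReal = π := by
      rw [EuclideanSpace.volume_ball]
      simp [one_add_one_eq_two, Real.Gamma_two, Real.sq_sqrt pi_nonneg,
        ENNReal.toReal_ofReal pi_nonneg]
    rw [finrank_euclideanSpace_fin, measureReal_def, hball]
    simp only [pow_one, smul_eq_mul, nsmul_eq_mul, Nat.cast_ofNat]
    norm_num
  rw [h1]
  -- the substitution map and its derivative
  set φ : ℝ → ℝ := fun t => a ^ (1/α) * (t ^ (1/α) * (1 - t) ^ (-(1/α))) with hφ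
  set D : ℝ → ℝ := fun t => a ^ (1/α) / α * (t ^ (1/α - 1) * (1 - t) ^ (-(1/α) - 1)) with hD
  have hkey : ∀ t ∈ Ioo (0:ℝ) 1, a * (φ t) ^ (-α) = (1 - t) / t := by
    intro t ht
    have ht0 := ht.1
    have ht1 : (0:ℝ) < 1 - t := by linarith [ht.2]
    have e1 : (1/α) * (-α) = -1 := by field_simp
    have e2 : (-(1/α)) * (-α) = 1 := by field_simp
    rw [hφ]
    simp only
    rw [Real.mul_rpow (by positivity) (by positivity),
        Real.mul_rpow (by positivity) (by positivity),
        ← Real.rpow_mul ha.le, ← Real.rpow_mul ht0.le, ← Real.rpow_mul ht1.le, e1, e2,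
        Real.rpow_neg_one, Real.rpow_neg_one, Real.rpow_one]
    field_simp
  have hderiv : ∀ t ∈ Ioo (0:ℝ) 1, HasDerivAt φ (D t) t := by
    intro t ht
    have ht0 := ht.1
    have ht1 : (0:ℝ) < 1 - t := by linarith [ht.2]
    have h1' : HasDerivAt (fun t : ℝ => t ^ (1/α)) ((1/α) * t ^ (1/α - 1)) t :=
      Real.hasDerivAt_rpow_const (Or.inl ht0.ne')
    have h2' : HasDerivAt (fun t : ℝ => (1 - t) ^ (-(1/α))) ((1/α) * (1 - t) ^ (-(1/α) - 1)) t := by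
      have hin : HasDerivAt (fun t : ℝ => 1 - t) (-1) t := (hasDerivAt_id t).const_sub 1
      have := (Real.hasDerivAt_rpow_const (x := 1 - t) (p := -(1/α)) (Or.inl ht1.ne')).comp t hin
      exact this.congr_deriv (by ring)
    have hmul := (h1'.mul h2').const_mul (a ^ (1/α))
    refine hmul.congr_deriv ?_
    rw [hD]
    simp only
    have et : t ^ (1/α) = t * t ^ (1/α - 1) := by
      have h := Real.rpow_add ht0 1 (1/α - 1)
      simp only [Real.rpow_one] at h
      rw [← h]; ring_nf
    have es : (1 - t) ^ (-(1/α)) = (1 - t) * (1 - t) ^ (-(1/α) - 1) := by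
      have h := Real.rpow_add ht1 1 (-(1/α) - 1)
      simp only [Real.rpow_one] at h
      rw [← h]; ring_nf
    rw [et, es]
    ring
  have hinj : InjOn φ (Ioo 0 1) := by
    intro t1 h1' t2 h2' heq
    have e1 := hkey t1 h1'
    have e2 := hkey t2 h2'
    rw [heq, e2] at e1
    have ht10 := h1'.1.ne'
    have ht20 := h2'.1.ne'
    field_simp at e1
    linarith
  have hφpos : ∀ t ∈ Ioo (0:ℝ) 1, 0 < φ t := by
    intro t ht
    have ht0 := ht.1
    have ht1 : (0:ℝ) < 1 - t := by linarith [ht.2]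
    rw [hφ]
    positivity
  have himg : φ '' (Ioo 0 1) = Ioi (0:ℝ) := by
    apply Subset.antisymm
    · rintro _ ⟨t, ht, rfl⟩
      exact hφpos t ht
    · intro y hy
      have hy0 : (0:ℝ) < y := hy
      have hu0 : (0:ℝ) < a * y ^ (-α) := by positivity
      set u := a * y ^ (-α) with hu
      have ht : (1 + u)⁻¹ ∈ Ioo (0:ℝ) 1 := by
        constructor
        · positivity
        · rw [inv_lt_one_iff₀]; right; linarith
      refine ⟨(1 + u)⁻¹, ht, ?_⟩
      have hk := hkey _ ht
      have hval : (1 - (1 + u)⁻¹) / (1 + u)⁻¹ = u := by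
        have : (1:ℝ) + u ≠ 0 := by positivity
        field_simp
        ring
      rw [hval] at hk
      -- now a * (φ t)^(-α) = u = a * y^(-α)
      have hpow : (φ ((1 + u)⁻¹)) ^ (-α) = y ^ (-α) := by
        have := hk.trans hu
        exact mul_left_cancel₀ ha.ne' this
      have hφt := hφpos _ ht
      have : (φ ((1 + u)⁻¹)) ^ ((-α) * (-α)⁻¹) = y ^ ((-α) * (-α)⁻¹) := by
        rw [Real.rpow_mul hφt.le, Real.rpow_mul hy0.le, hpow]
      rwa [mul_inv_cancel₀ (by simp [hα0.ne']), Real.rpow_one, Real.rpow_one] at this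
  -- Step 2: change of variables
  have h2 : (∫ r in Ioi (0:ℝ), r * (1 - ((1 + a * r ^ (-α)) ^ Ψ)⁻¹))
      = ∫ t in Ioo (0:ℝ) 1, |D t| • (φ t * (1 - ((1 + a * (φ t) ^ (-α)) ^ Ψ)⁻¹)) := by
    rw [← himg, integral_image_eq_integral_abs_deriv_smul measurableSet_Ioo
      (fun t ht => (hderiv t ht).hasDerivWithinAt) hinj]
  rw [h2]
  -- Step 3: pointwise simplification
  have h3 : ∀ t ∈ Ioo (0:ℝ) 1, |D t| • (φ t * (1 - ((1 + a * (φ t) ^ (-α)) ^ Ψ)⁻¹))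
      = (a ^ (2/α) / α) * (t ^ (2/α - 1) * (1 - t) ^ (-(2/α) - 1) * (1 - t ^ Ψ)) := by
    intro t ht
    have ht0 := ht.1
    have ht1 : (0:ℝ) < 1 - t := by linarith [ht.2]
    have hD0 : 0 < D t := by
      rw [hD]; positivity
    rw [smul_eq_mul, abs_of_pos hD0, hkey t ht]
    have e1 : 1 + (1 - t)/t = t⁻¹ := by field_simp; ring
    rw [e1, inv_pow, inv_inv, hD, hφ]
    simp only
    have ea : a ^ (1/α) * a ^ (1/α) = a ^ (2/α) := by
      rw [← Real.rpow_add ha]; norm_num; ring_nf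
    have et : t ^ (1/α - 1) * t ^ (1/α) = t ^ (2/α - 1) := by
      rw [← Real.rpow_add ht0]; ring_nf
    have es : (1-t) ^ (-(1/α) - 1) * (1-t) ^ (-(1/α)) = (1-t) ^ (-(2/α) - 1) := by
      rw [← Real.rpow_add ht1]; ring_nf
    calc a ^ (1/α) / α * (t ^ (1/α - 1) * (1 - t) ^ (-(1/α) - 1)) *
          (a ^ (1/α) * (t ^ (1/α) * (1 - t) ^ (-(1/α))) * (1 - t ^ Ψ))
        = (a ^ (1/α) * a ^ (1/α)) * ((t ^ (1/α - 1) * t ^ (1/α)) *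
            ((1-t) ^ (-(1/α) - 1) * (1-t) ^ (-(1/α)))) * (1 - t ^ Ψ) / α := by ring
      _ = (a ^ (2/α) / α) * (t ^ (2/α - 1) * (1 - t) ^ (-(2/α) - 1) * (1 - t ^ Ψ)) := by
          rw [ea, et, es]; ring
  rw [setIntegral_congr_fun measurableSet_Ioo h3, integral_const_mul]
  -- Step 4: the Beta sum
  have h5 : (∫ t in Ioo (0:ℝ) 1, t ^ (2/α - 1) * (1 - t) ^ (-(2/α) - 1) * (1 - t ^ Ψ))
      = ∑ m ∈ Finset.Icc 1 Ψ,
          (Ψ.choose m : ℝ) * betaFn ((Ψ : ℝ) - m + 2 / α) ((m : ℝ) - 2 / α) := by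
    have hpt : ∀ t ∈ Ioo (0:ℝ) 1,
        t ^ (2/α - 1) * (1 - t) ^ (-(2/α) - 1) * (1 - t ^ Ψ)
        = ∑ m ∈ Finset.Icc 1 Ψ, (Ψ.choose m : ℝ) *
            (t ^ (((Ψ:ℝ) - m + 2/α) - 1) * (1 - t) ^ (((m:ℝ) - 2/α) - 1)) := by
      intro t ht
      have ht0 := ht.1
      have ht1 : (0:ℝ) < 1 - t := by linarith [ht.2]
      have key : ∀ m ∈ Finset.Icc 1 Ψ, (Ψ.choose m : ℝ) *
            (t ^ (((Ψ:ℝ) - m + 2/α) - 1) * (1 - t) ^ (((m:ℝ) - 2/α) - 1))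
          = t ^ (2/α - 1) * (1 - t) ^ (-(2/α) - 1) *
              ((Ψ.choose m : ℝ) * ((1-t) ^ m * t ^ (Ψ - m))) := by
        intro m hm
        simp only [Finset.mem_Icc] at hm
        rw [show ((Ψ:ℝ) - m + 2/α) - 1 = ((Ψ - m : ℕ) : ℝ) + (2/α - 1) by
              push_cast [hm.2]; ring,
            show ((m:ℝ) - 2/α) - 1 = ((m : ℕ) : ℝ) + (-(2/α) - 1) by ring,
            Real.rpow_add ht0, Real.rpow_add ht1, Real.rpow_natCast, Real.rpow_natCast]
        ring
      rw [Finset.sum_congr rfl key, ← Finset.mul_sum]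
      congr 1
      have hb := add_pow (1 - t) t Ψ
      rw [sub_add_cancel, one_pow] at hb
      have hins : Finset.range (Ψ + 1) = insert 0 (Finset.Icc 1 Ψ) := by
        ext k; simp; omega
      rw [hins, Finset.sum_insert (by simp)] at hb
      simp only [pow_zero, one_mul, Nat.choose_zero_right, Nat.cast_one, mul_one,
        Nat.sub_zero] at hb
      have hrw : ∑ m ∈ Finset.Icc 1 Ψ, (1-t)^m * t^(Ψ-m) * (Ψ.choose m : ℝ)
          = ∑ m ∈ Finset.Icc 1 Ψ, (Ψ.choose m : ℝ) * ((1-t)^m * t^(Ψ-m)) :=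
        Finset.sum_congr rfl fun m _ => by ring
      rw [hrw] at hb
      linarith
    rw [setIntegral_congr_fun measurableSet_Ioo hpt, integral_finset_sum]
    · refine Finset.sum_congr rfl fun m hm => ?_
      rw [betaFn, intervalIntegral.integral_of_le zero_le_one,
        MeasureTheory.integral_Ioc_eq_integral_Ioo, integral_const_mul]
    · intro m hm
      simp only [Finset.mem_Icc] at hm
      have hx : (0:ℝ) < (Ψ:ℝ) - m + 2/α := by
        have : (m:ℝ) ≤ (Ψ:ℝ) := by exact_mod_cast hm.2
        linarith
      have hy : (0:ℝ) < (m:ℝ) - 2/α := by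
        have : (1:ℝ) ≤ (m:ℝ) := by exact_mod_cast hm.1
        linarith
      exact (betaAux_integrableOn hx hy).const_mul _
  rw [h5, Cfun]
  ring
end

section
/- For every real number α > 2, the function M ↦ C(α, M) is strictly increasing on the positive integers: C(α, M+1) > C(α, M) for every positive integer M. In particular, C(α, M) > C(α, 1) for every integer M > 1. -/
open MeasureTheory Real

lemma betaFn_integrable {a b : ℝ} (ha : 0 < a) (hb : 0 < b) :
    IntervalIntegrable (fun t : ℝ => t ^ (a-1) * (1-t) ^ (b-1)) volume 0 1 := by
  have h := Complex.betaIntegral_convergent (u := a) (v := b) (by simpa) (by simpa)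
  rw [intervalIntegrable_iff] at h ⊢
  have h2 : IntegrableOn (fun t : ℝ => Complex.reCLM ((t:ℂ) ^ ((a:ℂ)-1) * (1-(t:ℂ)) ^ ((b:ℂ)-1)))
      (Set.uIoc (0:ℝ) 1) volume := Complex.reCLM.integrable_comp h
  refine h2.congr_fun (fun t ht => ?_) measurableSet_uIoc
  rw [Set.uIoc_of_le zero_le_one] at ht
  beta_reduce
  rw [show ((a:ℂ)-1) = ((a-1 : ℝ) : ℂ) by push_cast; ring,
    show ((b:ℂ)-1) = ((b-1 : ℝ) : ℂ) by push_cast; ring,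
    show ((1:ℂ) - (t:ℂ)) = ((1 - t : ℝ) : ℂ) by push_cast; ring,
    ← Complex.ofReal_cpow ht.1.le, ← Complex.ofReal_cpow (by linarith [ht.2] : (0:ℝ) ≤ 1 - t),
    ← Complex.ofReal_mul, Complex.reCLM_apply, Complex.ofReal_re]

lemma betaFn_pos {a b : ℝ} (ha : 0 < a) (hb : 0 < b) : 0 < betaFn a b := by
  refine intervalIntegral.intervalIntegral_pos_of_pos_on (betaFn_integrable ha hb)
    (fun t ht => ?_) one_pos
  exact mul_pos (rpow_pos_of_pos ht.1 _) (rpow_pos_of_pos (by linarith [ht.2]) _)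

lemma betaFn_rec {x y : ℝ} (hx : 0 < x) (hy : 0 < y) :
    betaFn x y = betaFn (x+1) y + betaFn x (y+1) := by
  have h1 := betaFn_integrable (a := x+1) (b := y) (by linarith) hy
  have h2 := betaFn_integrable (a := x) (b := y+1) hx (by linarith)
  unfold betaFn
  rw [← intervalIntegral.integral_add (by simpa using h1) (by simpa using h2)]
  refine intervalIntegral.integral_congr fun t ht => ?_
  rw [Set.uIcc_of_le zero_le_one] at ht
  simp only [add_sub_cancel_right]
  rcases eq_or_lt_of_le ht.1 with h0 | h0
  · rw [← h0]; norm_num [Real.zero_rpow hx.ne']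
  rcases eq_or_lt_of_le ht.2 with h1' | h1'
  · rw [h1']; norm_num [Real.zero_rpow hy.ne']
  have hx' : t ^ x = t ^ (x-1) * t := by
    rw [← Real.rpow_add_one h0.ne']; ring_nf
  have hy' : (1-t) ^ y = (1-t) ^ (y-1) * (1-t) := by
    rw [← Real.rpow_add_one (by linarith : (1:ℝ)-t ≠ 0)]; ring_nf
  rw [hx', hy']; ring

lemma sum_pascal (Ψ : ℕ) (f g : ℕ → ℝ) (hfg : ∀ m, 1 ≤ m → m ≤ Ψ → f m = g m + g (m+1)) :
    ∑ m ∈ Finset.Icc 1 (Ψ+1), ((Ψ+1).choose m : ℝ) * g m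
    = (∑ m ∈ Finset.Icc 1 Ψ, (Ψ.choose m : ℝ) * f m) + g 1 := by
  rw [← Finset.Ico_add_one_right_eq_Icc, Finset.sum_Ico_eq_sum_range, ← Finset.Ico_add_one_right_eq_Icc 1 Ψ,
    Finset.sum_Ico_eq_sum_range]
  simp only [Nat.succ_sub_one, Nat.add_sub_cancel, add_comm 1]
  have h1 : ∀ i ∈ Finset.range (Ψ+1), ((Ψ+1).choose (i+1) : ℝ) * g (i+1)
      = (Ψ.choose i : ℝ) * g (i+1) + (Ψ.choose (i+1) : ℝ) * g (i+1) := by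
    intro i _
    rw [Nat.choose_succ_succ]
    push_cast; ring
  rw [Finset.sum_congr rfl h1, Finset.sum_add_distrib, Finset.sum_range_succ',
    Finset.sum_range_succ, Nat.choose_succ_self]
  simp only [Nat.choose_zero_right, Nat.cast_one, one_mul, Nat.cast_zero, zero_mul, add_zero]
  have h2 : ∀ i ∈ Finset.range Ψ, (Ψ.choose (i+1) : ℝ) * f (i+1)
      = (Ψ.choose (i+1) : ℝ) * g (i+1+1) + (Ψ.choose (i+1) : ℝ) * g (i+1) := by
    intro i hi
    rw [hfg (i+1) (Nat.le_add_left 1 i) (Finset.mem_range.1 hi)]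
    ring
  rw [Finset.sum_congr rfl h2, Finset.sum_add_distrib]
  ring

lemma Cfun_succ (α : ℝ) (hα : 2 < α) (Ψ : ℕ) :
    Cfun α (Ψ+1) = Cfun α Ψ + (2 * π / α) * betaFn ((Ψ:ℝ) + 2/α) (1 - 2/α) := by
  have hs0 : 0 < 2/α := div_pos two_pos (by linarith)
  have hs1 : 2/α < 1 := (div_lt_one (by linarith)).2 hα
  unfold Cfun
  rw [← mul_add]
  congr 1
  have key := sum_pascal Ψ
    (fun m => betaFn ((Ψ:ℝ) - m + 2/α) ((m:ℝ) - 2/α))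
    (fun m => betaFn ((Ψ:ℝ) + 1 - m + 2/α) ((m:ℝ) - 2/α))
    (by
      intro m h1 h2
      have hm1 : (1:ℝ) ≤ m := Nat.one_le_cast.2 h1
      have hm2 : (m:ℝ) ≤ Ψ := Nat.cast_le.2 h2
      have hx : 0 < (Ψ:ℝ) - m + 2/α := by linarith
      have hy : 0 < (m:ℝ) - 2/α := by linarith
      have h := betaFn_rec hx hy
      rw [h]
      congr 2 <;> push_cast <;> ring)
  calc ∑ m ∈ Finset.Icc 1 (Ψ+1), (((Ψ+1).choose m : ℝ))
        * betaFn ((((Ψ+1):ℕ):ℝ) - m + 2/α) ((m:ℝ) - 2/α)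
      = ∑ m ∈ Finset.Icc 1 (Ψ+1), (((Ψ+1).choose m : ℝ))
        * betaFn ((Ψ:ℝ) + 1 - m + 2/α) ((m:ℝ) - 2/α) := by
        refine Finset.sum_congr rfl fun m _ => ?_
        congr 2
        push_cast; ring
    _ = (∑ m ∈ Finset.Icc 1 Ψ, (Ψ.choose m : ℝ) * betaFn ((Ψ:ℝ) - m + 2/α) ((m:ℝ) - 2/α))
        + betaFn ((Ψ:ℝ) + 1 - 1 + 2/α) ((1:ℝ) - 2/α) := by
        rw [key]; norm_num
    _ = (∑ m ∈ Finset.Icc 1 Ψ, (Ψ.choose m : ℝ) * betaFn ((Ψ:ℝ) - m + 2/α) ((m:ℝ) - 2/α))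
        + betaFn ((Ψ:ℝ) + 2/α) (1 - 2/α) := by
        congr 2
        ring

/-- For `α > 2`, `M ↦ C(α, M)` is strictly increasing on positive integers;
in particular `C(α, M) > C(α, 1)` for every integer `M > 1`. -/
theorem Cfun_strictMono (α : ℝ) (hα : 2 < α) :
    (∀ M : ℕ, 0 < M → Cfun α M < Cfun α (M + 1)) ∧
    (∀ M : ℕ, 1 < M → Cfun α 1 < Cfun α M) := by
  have hs0 : 0 < 2/α := div_pos two_pos (by linarith)
  have hs1 : 2/α < 1 := (div_lt_one (by linarith)).2 hα
  have hπ : 0 < 2 * π / α := div_pos (by positivity) (by linarith)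
  have hstep : ∀ M : ℕ, Cfun α M < Cfun α (M + 1) := by
    intro M
    rw [Cfun_succ α hα M]
    have hb : 0 < betaFn ((M:ℝ) + 2/α) (1 - 2/α) :=
      betaFn_pos (by positivity) (by linarith)
    nlinarith
  refine ⟨fun M _ => hstep M, fun M hM => ?_⟩
  induction M with
  | zero => omega
  | succ n ih =>
    rcases Nat.lt_or_ge 1 n with h | h
    · exact (ih h).trans (hstep n)
    · interval_cases n
      · omega
      · exact hstep 1
end

section
/- For every real number α > 2, lim_{M → ∞} C(α, M) / M^{2/α} = π · Γ(1 − 2/α), where the limit is over positive integers M and Γ is the Gamma function. -/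
open MeasureTheory Real Filter

open Topology

lemma betaFn_eq_complex (a b : ℝ) (ha : 0 < a) (hb : 0 < b) :
    (betaFn a b : ℂ) = Complex.betaIntegral a b := by
  rw [betaFn, Complex.betaIntegral, ← intervalIntegral.integral_ofReal]
  apply intervalIntegral.integral_congr
  intro x hx
  rw [Set.uIcc_of_le (by norm_num : (0:ℝ) ≤ 1)] at hx
  push_cast
  rw [Complex.ofReal_cpow hx.1 (a-1), Complex.ofReal_cpow (by linarith [hx.2] : (0:ℝ) ≤ 1 - x) (b-1)]
  push_cast
  ring_nf

lemma betaFn_eq (a b : ℝ) (ha : 0 < a) (hb : 0 < b) :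
    betaFn a b = Real.Gamma a * Real.Gamma b / Real.Gamma (a + b) := by
  have h := Complex.Gamma_mul_Gamma_eq_betaIntegral
    (show 0 < (a:ℂ).re by simpa) (show 0 < (b:ℂ).re by simpa)
  have hab : Real.Gamma (a + b) ≠ 0 := by
    intro h0
    exact absurd h0 (Real.Gamma_pos_of_pos (by linarith)).ne'
  rw [← betaFn_eq_complex a b ha hb] at h
  have h2 : (Real.Gamma a * Real.Gamma b : ℂ) = (Real.Gamma (a+b) : ℂ) * (betaFn a b : ℂ) := by
    rw [Complex.Gamma_ofReal, Complex.Gamma_ofReal, ← Complex.ofReal_add, Complex.Gamma_ofReal] at h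
    exact h
  have h3 : Real.Gamma a * Real.Gamma b = Real.Gamma (a+b) * betaFn a b := by exact_mod_cast h2
  rw [h3]
  field_simp

lemma betaIntegrand_intervalIntegrable {a b : ℝ} (ha : 0 < a) (hb : 0 < b) :
    IntervalIntegrable (fun t : ℝ => t ^ (a - 1) * (1 - t) ^ (b - 1)) volume 0 1 := by
  have h := Complex.betaIntegral_convergent (u := a) (v := b)
    (by simpa using ha) (by simpa using hb)
  rw [intervalIntegrable_iff] at h ⊢
  have h2 := h.re
  apply h2.congr
  rw [Set.uIoc_of_le (by norm_num : (0:ℝ) ≤ 1)]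
  refine (ae_restrict_iff' measurableSet_Ioc).2 (Filter.Eventually.of_forall fun x hx => ?_)
  have hx0 : (0:ℝ) ≤ x := hx.1.le
  have hx1 : (0:ℝ) ≤ 1 - x := by linarith [hx.2]
  have e1 : ((x:ℂ)) ^ ((a:ℂ) - 1) = ((x ^ (a-1) : ℝ) : ℂ) := by
    rw [Complex.ofReal_cpow hx0 (a-1)]; push_cast; ring_nf
  have e2 : ((1:ℂ) - (x:ℂ)) ^ ((b:ℂ) - 1) = (((1 - x) ^ (b-1) : ℝ) : ℂ) := by
    rw [Complex.ofReal_cpow hx1 (b-1)]; push_cast; ring_nf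
  simp only [e1, e2, ← Complex.ofReal_mul]
  exact Complex.ofReal_re _

lemma pointwise_identity (s : ℝ) (hs : 0 < s) (hs1 : s < 1) (n : ℕ) {x : ℝ}
    (hx0 : 0 < x) (hx1 : x < 1) :
    ∑ m ∈ Finset.Icc 1 n, (n.choose m : ℝ) *
        (x ^ ((n:ℝ) - m + s - 1) * (1 - x) ^ ((m:ℝ) - s - 1))
      = ∑ k ∈ Finset.range n, x ^ ((k:ℝ) + s - 1) * (1 - x) ^ (1 - s - 1) := by
  have h1x : 0 < 1 - x := by linarith
  have hL : ∀ m ∈ Finset.Icc 1 n, (n.choose m : ℝ) *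
        (x ^ ((n:ℝ) - m + s - 1) * (1 - x) ^ ((m:ℝ) - s - 1))
      = (x ^ (s-1) * (1-x) ^ (-s-1)) * ((n.choose m : ℝ) * ((1-x) ^ m * x ^ (n - m))) := by
    intro m hm
    rw [Finset.mem_Icc] at hm
    have e1 : x ^ ((n:ℝ) - m + s - 1) = x ^ (s-1) * x ^ (n - m : ℕ) := by
      rw [← Real.rpow_natCast x (n-m), ← Real.rpow_add hx0]
      congr 1
      push_cast [Nat.cast_sub hm.2]
      ring
    have e2 : (1-x) ^ ((m:ℝ) - s - 1) = (1-x) ^ (-s-1) * (1-x) ^ (m : ℕ) := by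
      rw [← Real.rpow_natCast (1-x) m, ← Real.rpow_add h1x]
      congr 1
      ring
    rw [e1, e2]; ring
  rw [Finset.sum_congr rfl hL, ← Finset.mul_sum]
  have hbin : ∑ m ∈ Finset.Icc 1 n, (n.choose m : ℝ) * ((1-x) ^ m * x ^ (n - m))
      = 1 - x ^ n := by
    have hpow := add_pow (1-x) x n
    have hone : ((1-x) + x) ^ n = 1 := by norm_num
    rw [hone] at hpow
    have hins : Finset.range (n+1) = insert 0 (Finset.Icc 1 n) := by
      ext m; simp [Nat.lt_succ_iff]; omega
    rw [hins, Finset.sum_insert (by simp)] at hpow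
    simp only [pow_zero, Nat.sub_zero, Nat.choose_zero_right, Nat.cast_one, one_mul, mul_one] at hpow
    have hcomm : ∑ m ∈ Finset.Icc 1 n, (1-x) ^ m * x ^ (n - m) * (n.choose m : ℝ)
        = ∑ m ∈ Finset.Icc 1 n, (n.choose m : ℝ) * ((1-x) ^ m * x ^ (n - m)) :=
      Finset.sum_congr rfl fun m _ => by ring
    rw [hcomm] at hpow
    linarith
  rw [hbin]
  have hR : ∀ k ∈ Finset.range n, x ^ ((k:ℝ) + s - 1) * (1 - x) ^ (1 - s - 1)
      = (x ^ (s-1) * (1-x) ^ (-s)) * x ^ (k : ℕ) := by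
    intro k _
    have e1 : x ^ ((k:ℝ) + s - 1) = x ^ (s-1) * x ^ (k : ℕ) := by
      rw [← Real.rpow_natCast x k, ← Real.rpow_add hx0]
      congr 1; ring
    have e2 : (1-x) ^ (1 - s - 1) = (1-x) ^ (-s) := by norm_num
    rw [e1, e2]; ring
  rw [Finset.sum_congr rfl hR, ← Finset.mul_sum]
  have hgeom : 1 - x ^ n = (1 - x) * ∑ k ∈ Finset.range n, x ^ k := by
    have := geom_sum_mul x n
    linarith [this]
  have hfac : (1-x) ^ (-s-1) * (1 - x) = (1-x) ^ (-s) := by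
    have h := Real.rpow_add h1x (-s-1) 1
    rw [Real.rpow_one] at h
    rw [← h]
    norm_num
  calc x ^ (s-1) * (1-x) ^ (-s-1) * (1 - x ^ n)
      = x ^ (s-1) * ((1-x) ^ (-s-1) * (1-x)) * ∑ k ∈ Finset.range n, x ^ k := by
        rw [hgeom]; ring
    _ = x ^ (s-1) * (1-x) ^ (-s) * ∑ k ∈ Finset.range n, x ^ k := by rw [hfac]


lemma sum_betaFn_eq (s : ℝ) (hs : 0 < s) (hs1 : s < 1) (n : ℕ) :
    ∑ m ∈ Finset.Icc 1 n, (n.choose m : ℝ) * betaFn ((n:ℝ) - m + s) ((m:ℝ) - s)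
      = ∑ k ∈ Finset.range n, betaFn ((k:ℝ) + s) (1 - s) := by
  have hint : ∀ m ∈ Finset.Icc 1 n, IntervalIntegrable
      (fun t : ℝ => (n.choose m : ℝ) *
        (t ^ ((n:ℝ) - m + s - 1) * (1-t) ^ ((m:ℝ) - s - 1))) volume 0 1 := by
    intro m hm
    rw [Finset.mem_Icc] at hm
    have h1 : 0 < (n:ℝ) - m + s := by
      have : (m:ℝ) ≤ n := Nat.cast_le.2 hm.2
      linarith
    have h2 : 0 < (m:ℝ) - s := by
      have : (1:ℝ) ≤ m := Nat.one_le_cast.2 hm.1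
      linarith
    exact (betaIntegrand_intervalIntegrable h1 h2).const_mul _
  have hint2 : ∀ k ∈ Finset.range n, IntervalIntegrable
      (fun t : ℝ => t ^ ((k:ℝ) + s - 1) * (1-t) ^ (1 - s - 1)) volume 0 1 := by
    intro k _
    exact betaIntegrand_intervalIntegrable (by positivity) (by linarith)
  have hL : ∑ m ∈ Finset.Icc 1 n, (n.choose m : ℝ) * betaFn ((n:ℝ) - m + s) ((m:ℝ) - s)
      = ∫ t in (0:ℝ)..1, ∑ m ∈ Finset.Icc 1 n, (n.choose m : ℝ) *
          (t ^ ((n:ℝ) - m + s - 1) * (1-t) ^ ((m:ℝ) - s - 1)) := by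
    rw [intervalIntegral.integral_finset_sum hint]
    exact Finset.sum_congr rfl fun m hm => by
      rw [betaFn, ← intervalIntegral.integral_const_mul]
  have hR : ∑ k ∈ Finset.range n, betaFn ((k:ℝ) + s) (1 - s)
      = ∫ t in (0:ℝ)..1, ∑ k ∈ Finset.range n,
          t ^ ((k:ℝ) + s - 1) * (1-t) ^ (1 - s - 1) := by
    rw [intervalIntegral.integral_finset_sum hint2]
    exact Finset.sum_congr rfl fun k _ => by rw [betaFn]
  rw [hL, hR]
  apply intervalIntegral.integral_congr_ae
  have hae : ∀ᵐ t : ℝ, t ≠ 1 := by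
    have hset : {t : ℝ | ¬ t ≠ 1} = {1} := by ext t; simp
    rw [MeasureTheory.ae_iff, hset]
    exact MeasureTheory.measure_singleton 1
  filter_upwards [hae] with t ht1 htI
  rw [Set.uIoc_of_le (by norm_num : (0:ℝ) ≤ 1)] at htI
  exact pointwise_identity s hs hs1 n htI.1 (lt_of_le_of_ne htI.2 ht1)

lemma sum_gamma_telescope (s : ℝ) (hs : 0 < s) (n : ℕ) :
    ∑ k ∈ Finset.range n, Real.Gamma ((k:ℝ) + s) / Real.Gamma ((k:ℝ) + 1)
      = Real.Gamma ((n:ℝ) + s) / (s * Real.Gamma n) := by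
  induction n with
  | zero => simp [Real.Gamma_zero]
  | succ n ih =>
    rw [Finset.sum_range_succ, ih]
    have hns : ((n:ℝ) + s) ≠ 0 := by positivity
    have hGns : Real.Gamma ((n:ℝ) + 1 + s) = ((n:ℝ) + s) * Real.Gamma ((n:ℝ) + s) := by
      rw [show (n:ℝ) + 1 + s = ((n:ℝ) + s) + 1 by ring, Real.Gamma_add_one hns]
    rcases Nat.eq_zero_or_pos n with hn0 | hnpos
    · subst hn0
      simp only [Nat.cast_zero, Nat.cast_one, zero_add] at hGns ⊢
      rw [Real.Gamma_zero, Real.Gamma_one, hGns]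
      rw [mul_zero, div_zero]
      field_simp
      ring
    · have hn : (n:ℝ) ≠ 0 := by positivity
      have hGn : Real.Gamma (n:ℝ) ≠ 0 := (Real.Gamma_pos_of_pos (by positivity)).ne'
      have hGn1 : Real.Gamma ((n:ℝ) + 1) = (n:ℝ) * Real.Gamma (n:ℝ) := Real.Gamma_add_one hn
      push_cast
      rw [hGns, hGn1]
      field_simp

lemma gamma_prod (s : ℝ) (hs : 0 < s) : ∀ n : ℕ,
    Real.Gamma s * ∏ j ∈ Finset.range n, (s + (j:ℝ)) = Real.Gamma (s + n) := by
  intro n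
  induction n with
  | zero => simp
  | succ n ih =>
    rw [Finset.prod_range_succ, ← mul_assoc, ih]
    push_cast
    rw [show s + ((n:ℝ) + 1) = (s + (n:ℝ)) + 1 by ring,
      Real.Gamma_add_one (by positivity : s + (n:ℝ) ≠ 0)]
    ring

lemma gamma_ratio_tendsto (s : ℝ) (hs : 0 < s) :
    Tendsto (fun n : ℕ => Real.Gamma ((n:ℝ) + s) / (Real.Gamma n * (n:ℝ) ^ s)) atTop
      (𝓝 1) := by
  have hGs : 0 < Real.Gamma s := Real.Gamma_pos_of_pos hs
  have key : ∀ n : ℕ, 1 ≤ n → Real.Gamma ((n:ℝ) + s) / (Real.Gamma n * (n:ℝ) ^ s)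
      = ((n:ℝ) / ((n:ℝ) + s)) * (Real.Gamma s / Real.GammaSeq s n) := by
    intro n hn
    have hn0 : 0 < (n:ℝ) := by exact_mod_cast hn
    have hP : (0:ℝ) < ∏ j ∈ Finset.range (n+1), (s + (j:ℝ)) :=
      Finset.prod_pos fun j _ => by positivity
    have hGn : 0 < Real.Gamma (n:ℝ) := Real.Gamma_pos_of_pos hn0
    have hns : (0:ℝ) < (n:ℝ) + s := by positivity
    have hpow : (0:ℝ) < (n:ℝ) ^ s := Real.rpow_pos_of_pos hn0 s
    have hGns : 0 < Real.Gamma ((n:ℝ) + s) := Real.Gamma_pos_of_pos hns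
    have hGP : Real.Gamma s * ∏ j ∈ Finset.range (n+1), (s + (j:ℝ))
        = ((n:ℝ) + s) * Real.Gamma ((n:ℝ) + s) := by
      rw [gamma_prod s hs (n+1)]
      push_cast
      rw [show s + ((n:ℝ) + 1) = (s + (n:ℝ)) + 1 by ring,
        Real.Gamma_add_one (by positivity : s + (n:ℝ) ≠ 0), add_comm s (n:ℝ)]
    have hfac : ((n.factorial : ℕ) : ℝ) = (n:ℝ) * Real.Gamma (n:ℝ) := by
      rw [← Real.Gamma_nat_eq_factorial, Real.Gamma_add_one hn0.ne']
    have hfacpos : (0:ℝ) < ((n.factorial : ℕ) : ℝ) := by positivity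
    have hPne := hP.ne'
    have hGnne := hGn.ne'
    have hpowne := hpow.ne'
    have hnsne := hns.ne'
    have hfacne := hfacpos.ne'
    rw [Real.GammaSeq]
    field_simp
    linear_combination ((n:ℝ)+s) * Real.Gamma ((n:ℝ)+s) * hfac
      - ((n:ℝ) * Real.Gamma (n:ℝ)) * hGP
  have h1 : Tendsto (fun n : ℕ => (n:ℝ) / ((n:ℝ) + s)) atTop (𝓝 1) :=
    tendsto_natCast_div_add_atTop s
  have h2 : Tendsto (fun n : ℕ => Real.Gamma s / Real.GammaSeq s n) atTop (𝓝 1) := by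
    have h := (tendsto_const_nhds (x := Real.Gamma s) (f := atTop (α := ℕ))).div
      (Real.GammaSeq_tendsto_Gamma s) hGs.ne'
    simpa [div_self hGs.ne', Pi.div_def] using h
  have h3 := h1.mul h2
  rw [mul_one] at h3
  apply h3.congr'
  filter_upwards [eventually_ge_atTop 1] with n hn
  exact (key n hn).symm

/-- For `α > 2`, `C(α, M) / M^{2/α} → π Γ(1 − 2/α)` as `M → ∞` over positive integers. -/
theorem Cfun_asymptotics (α : ℝ) (hα : 2 < α) :
    Tendsto (fun M : ℕ => Cfun α M / (M : ℝ) ^ (2 / α)) atTop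
      (nhds (π * Real.Gamma (1 - 2 / α))) := by
  have hα0 : 0 < α := by linarith
  have hs : 0 < 2 / α := by positivity
  have hs1 : 2 / α < 1 := (div_lt_one hα0).2 hα
  have hform : ∀ n : ℕ, 1 ≤ n → Cfun α n / (n : ℝ) ^ (2 / α)
      = (π * Real.Gamma (1 - 2 / α)) *
        (Real.Gamma ((n : ℝ) + 2 / α) / (Real.Gamma n * (n : ℝ) ^ (2 / α))) := by
    intro n hn
    have hn0 : 0 < (n : ℝ) := by exact_mod_cast hn
    have hpow : (0:ℝ) < (n : ℝ) ^ (2 / α) := Real.rpow_pos_of_pos hn0 _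
    have hGn : 0 < Real.Gamma (n : ℝ) := Real.Gamma_pos_of_pos hn0
    have hsum : (∑ m ∈ Finset.Icc 1 n, (n.choose m : ℝ) *
          betaFn ((n : ℝ) - m + 2 / α) ((m : ℝ) - 2 / α))
        = Real.Gamma (1 - 2 / α) *
          (Real.Gamma ((n : ℝ) + 2 / α) / ((2 / α) * Real.Gamma n)) := by
      rw [sum_betaFn_eq (2 / α) hs hs1 n, ← sum_gamma_telescope (2 / α) hs n,
        Finset.mul_sum]
      refine Finset.sum_congr rfl fun k _ => ?_
      rw [betaFn_eq _ _ (by positivity) (by linarith),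
        show ((k : ℝ) + 2 / α) + (1 - 2 / α) = (k : ℝ) + 1 by ring]
      ring
    rw [Cfun, hsum]
    have h1 := hpow.ne'
    have h2 := hGn.ne'
    have h3 : α ≠ 0 := hα0.ne'
    field_simp
  have hrat := gamma_ratio_tendsto (2 / α) hs
  have hlim := (tendsto_const_nhds (x := π * Real.Gamma (1 - 2 / α))
    (f := atTop (α := ℕ))).mul hrat
  rw [mul_one] at hlim
  apply hlim.congr'
  filter_upwards [eventually_ge_atTop 1] with n hn
  exact (hform n hn).symm
end
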